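/- Every analytic filter on ℕ containing the Fréchét filter, viewed as a subset of Cantor space 2^ℕ, is meager in 2^ℕ. -/

import Mathlib

open Set Topology Filter

section Hull
variable {X : Type*} [TopologicalSpace X]

lemma isMeagre_iUnion' {ι : Sort*} [Countable ι] {s : ι → Set X} (h : ∀ i, IsMeagre (s i)) :
    IsMeagre (⋃ i, s i) := by
  rw [IsMeagre, compl_iUnion]
  exact (countable_iInter_mem).2 h

def mV (S : Set X) : Set X := ⋃₀ {U | IsOpen U ∧ IsMeagre (U ∩ S)}

lemma isOpen_mV (S : Set X) : IsOpen (mV S) :=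
  isOpen_sUnion fun _ h => h.1

lemma isMeagre_mV_inter [SecondCountableTopology X] (S : Set X) : IsMeagre (mV S ∩ S) := by
  set T : Set (Set X) := {b | b ∈ TopologicalSpace.countableBasis X ∧ IsMeagre (b ∩ S)} with hT
  have hTc : T.Countable :=
    (TopologicalSpace.countable_countableBasis X).mono fun b hb => hb.1
  have hsub : mV S ∩ S ⊆ ⋃ b ∈ T, (b ∩ S) := by
    rintro x ⟨hx, hxS⟩
    rcases hx with ⟨U, ⟨hUo, hUm⟩, hxU⟩
    rcases (TopologicalSpace.isBasis_countableBasis X).exists_subset_of_mem_open hxU hUo with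
      ⟨b, hb, hxb, hbU⟩
    exact mem_biUnion ⟨hb, hUm.mono (inter_subset_inter_left _ hbU)⟩ ⟨hxb, hxS⟩
  refine IsMeagre.mono hsub ?_
  have : Countable T := hTc.to_subtype
  rw [biUnion_eq_iUnion]
  exact isMeagre_iUnion' fun b => b.2.2

def mB (S : Set X) : Set X := (mV S)ᶜ ∪ (mV S ∩ S)

lemma subset_mB (S : Set X) : S ⊆ mB S := by
  intro x hx
  by_cases h : x ∈ mV S
  · exact Or.inr ⟨h, hx⟩
  · exact Or.inl h

lemma baireMeasurableSet_mB [SecondCountableTopology X] (S : Set X) :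
    BaireMeasurableSet (mB S) :=
  (((isOpen_mV S).baireMeasurableSet.compl).union
    (isMeagre_mV_inter S).baireMeasurableSet)

lemma mB_spec [SecondCountableTopology X] [BaireSpace X] {S Z : Set X}
    (hZ : BaireMeasurableSet Z) (hZB : Z ⊆ mB S) (hZS : Z ∩ S = ∅) : IsMeagre Z := by
  by_contra hnm
  rcases hZ.residualEq_isOpen with ⟨U, hUo, hUeq⟩
  have hsymm : IsMeagre ((Z \ U) ∪ (U \ Z)) := by
    rw [IsMeagre]
    have := hUeq
    rw [Filter.eventuallyEq_set] at this
    filter_upwards [this] with x hx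
    simp only [mem_union, mem_diff, mem_compl_iff]
    tauto
  have hZU : IsMeagre (Z \ U) := hsymm.mono subset_union_left
  have hUZ : IsMeagre (U \ Z) := hsymm.mono subset_union_right
  have hUne : U.Nonempty := by
    rcases eq_empty_or_nonempty U with h | h
    · exact absurd (hZU.mono (by simp [h])) hnm
    · exact h
  have hUS : IsMeagre (U ∩ S) := by
    have : U ∩ S ⊆ (U \ Z) ∪ (Z ∩ S) := by
      intro x ⟨hxU, hxS⟩
      by_cases h : x ∈ Z
      · exact Or.inr ⟨h, hxS⟩
      · exact Or.inl ⟨hxU, h⟩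
    rw [hZS, union_empty] at this
    exact hUZ.mono this
  have hUV : U ⊆ mV S := fun x hx => ⟨U, ⟨hUo, hUS⟩, hx⟩
  have hZmV : Z ∩ U ⊆ mV S ∩ S := by
    intro x ⟨hxZ, hxU⟩
    rcases hZB hxZ with h | h
    · exact absurd (hUV hxU) h
    · exact h
  have : IsMeagre U := by
    have hcov : U ⊆ (U \ Z) ∪ (Z ∩ U) := fun x hx => by
      by_cases h : x ∈ Z
      · exact Or.inr ⟨h, hx⟩
      · exact Or.inl ⟨hx, h⟩
    have hu : IsMeagre ((U \ Z) ∪ (Z ∩ U)) := by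
      rw [union_eq_iUnion]
      exact isMeagre_iUnion' (by rintro (_|_) <;>
        simp [hUZ, (isMeagre_mV_inter S).mono hZmV])
    exact hu.mono hcov
  have hnot : ¬ IsMeagre U := by
    intro h
    have hd : Dense Uᶜ := dense_of_mem_residual h
    have he : Uᶜ = univ := by rw [← hd.closure_eq, hUo.isClosed_compl.closure_eq]
    rcases hUne with ⟨x, hx⟩
    exact (he ▸ mem_univ x : x ∈ Uᶜ) hx
  exact hnot this
end Hull

lemma cyl_mem_nhds {E : ℕ → Type*} [∀ n, TopologicalSpace (E n)]
    {x : ∀ n, E n} {s : Set (∀ n, E n)} (hs : s ∈ 𝓝 x) :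
    ∃ n, {z : ∀ n, E n | ∀ i < n, z i = x i} ⊆ s := by
  rw [nhds_pi, Filter.mem_pi] at hs
  obtain ⟨I, hI, t, ht, hsub⟩ := hs
  obtain ⟨n, hn⟩ := hI.bddAbove
  refine ⟨n + 1, fun z hz => hsub fun i hi => ?_⟩
  rw [hz i (Nat.lt_succ_of_le (hn hi))]
  exact mem_of_mem_nhds (ht i)

section Analytic
variable {X : Type*} [TopologicalSpace X] [SecondCountableTopology X] [BaireSpace X]
  [T1Space X] [RegularSpace X]

theorem MeasureTheory.AnalyticSet.baireMeasurableSet' {A : Set X} (hA : MeasureTheory.AnalyticSet A) :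
    BaireMeasurableSet A := by
  rw [MeasureTheory.AnalyticSet] at hA
  rcases hA with rfl | ⟨f, hfc, rfl⟩
  · exact IsMeagre.empty.baireMeasurableSet
  -- the Souslin scheme
  set N : ∀ n, (Fin n → ℕ) → Set (ℕ → ℕ) := fun n σ => {z | ∀ i : Fin n, z i = σ i} with hN
  set As : ∀ n, (Fin n → ℕ) → Set X := fun n σ => f '' N n σ with hAs
  set Bs : ∀ n, (Fin n → ℕ) → Set X := fun n σ => mB (As n σ) ∩ closure (As n σ) with hBs
  have hAB : ∀ n σ, As n σ ⊆ Bs n σ := fun n σ =>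
    subset_inter (subset_mB _) subset_closure
  have hBP : ∀ n σ, BaireMeasurableSet (Bs n σ) := fun n σ =>
    (baireMeasurableSet_mB _).inter (isClosed_closure.isOpen_compl.baireMeasurableSet).of_compl
  have hNsplit : ∀ n (σ : Fin n → ℕ), N n σ = ⋃ m, N (n+1) (Fin.snoc σ m) := by
    intro n σ
    ext z
    simp only [hN, mem_setOf_eq, mem_iUnion]
    constructor
    · intro h
      refine ⟨z n, fun i => ?_⟩
      refine Fin.lastCases ?_ (fun j => ?_) i
      · simp [Fin.snoc_last]
      · simp [Fin.snoc_castSucc, h j]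
    · rintro ⟨m, hm⟩ i
      have := hm i.castSucc
      simpa [Fin.snoc_castSucc] using this
  have hstep : ∀ (y : X) n (σ : Fin n → ℕ), y ∈ Bs n σ → y ∉ Bs n σ \ ⋃ m, Bs (n+1) (Fin.snoc σ m)
      → ∃ m, y ∈ Bs (n+1) (Fin.snoc σ m) := by
    intro y n σ hy hy2
    by_contra h
    push_neg at h
    exact hy2 ⟨hy, by simpa using h⟩
  -- the meager error sets
  set M : ∀ n, (Fin n → ℕ) → Set X := fun n σ => Bs n σ \ ⋃ m, Bs (n+1) (Fin.snoc σ m) with hM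
  have hMmeagre : ∀ n σ, IsMeagre (M n σ) := by
    intro n σ
    refine mB_spec (S := As n σ) ((hBP n σ).diff (BaireMeasurableSet.iUnion fun m => hBP _ _))
      (fun y hy => (inter_subset_left hy.1 : _)) ?_
    ext y
    simp only [mem_inter_iff, mem_empty_iff_false, iff_false, not_and]
    rintro ⟨_, hy2⟩ hyA
    apply hy2
    have : y ∈ f '' ⋃ m, N (n+1) (Fin.snoc σ m) := by rwa [← hNsplit]
    rw [image_iUnion] at this
    rcases mem_iUnion.1 this with ⟨m, hm⟩
    exact mem_iUnion.2 ⟨m, hAB _ _ hm⟩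
  set Mtot : Set X := ⋃ n, ⋃ σ : Fin n → ℕ, M n σ with hMtot
  have hMtotMeagre : IsMeagre Mtot :=
    isMeagre_iUnion' fun n => isMeagre_iUnion' fun σ => hMmeagre n σ
  -- range f ⊆ Bs 0
  have hN0 : N 0 Fin.elim0 = univ := by
    ext z; simp [hN]
  have hA0 : As 0 Fin.elim0 = range f := by
    rw [hAs]; simp only; rw [hN0, image_univ]
  have hsub1 : range f ⊆ Bs 0 Fin.elim0 := hA0 ▸ hAB 0 Fin.elim0
  -- Bs 0 \ Mtot ⊆ range f
  have hsub2 : Bs 0 Fin.elim0 \ Mtot ⊆ range f := by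
    rintro y ⟨hy0, hyM⟩
    have hyM' : ∀ n σ, y ∉ M n σ := fun n σ h =>
      hyM (mem_iUnion.2 ⟨n, mem_iUnion.2 ⟨σ, h⟩⟩)
    -- build the branch
    have step : ∀ n (σ : Fin n → ℕ), y ∈ Bs n σ → ∃ m, y ∈ Bs (n+1) (Fin.snoc σ m) :=
      fun n σ hy => hstep y n σ hy (hyM' n σ)
    let g : ∀ n, {σ : Fin n → ℕ // y ∈ Bs n σ} := fun n =>
      Nat.rec ⟨Fin.elim0, hy0⟩
        (fun k p => ⟨Fin.snoc p.1 (step k p.1 p.2).choose, (step k p.1 p.2).choose_spec⟩) n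
    set x : ℕ → ℕ := fun k => (g (k+1)).1 (Fin.last k) with hx
    have hgx : ∀ n (i : Fin n), (g n).1 i = x i := by
      intro n
      induction n with
      | zero => exact fun i => i.elim0
      | succ k ih =>
        intro i
        refine Fin.lastCases ?_ (fun j => ?_) i
        · rfl
        · have h1 : (g (k+1)).1 j.castSucc = (g k).1 j := by
            show (Fin.snoc (g k).1 _ : Fin (k+1) → ℕ) j.castSucc = (g k).1 j
            simp [Fin.snoc_castSucc]
          rw [h1, ih j]
          rfl
    have hyc : ∀ n, y ∈ closure (As n ((g n).1)) := fun n => ((g n).2).2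
    -- y = f x
    have : y = f x := by
      by_contra hne
      have hys : ∀ s ∈ 𝓝 (f x), IsClosed s → y ∈ s := by
        intro s hs hsc
        obtain ⟨n, hn⟩ := cyl_mem_nhds (hfc.continuousAt.preimage_mem_nhds hs)
        have hNsub : N n ((g n).1) ⊆ f ⁻¹' s := by
          intro z hz
          apply hn
          intro i hi
          have := hz ⟨i, hi⟩
          rw [this, hgx n ⟨i, hi⟩]
        have : As n ((g n).1) ⊆ s := image_subset_iff.2 hNsub
        exact (hsc.closure_subset_iff.2 this) (hyc n)
      obtain ⟨s, ⟨hs, hsc⟩, hss⟩ := (closed_nhds_basis (f x)).mem_iff.1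
        (compl_singleton_mem_nhds (Ne.symm hne))
      exact (hss (hys s hs hsc)) rfl
    exact ⟨x, this.symm⟩
  -- conclude
  have heq : (Bs 0 Fin.elim0 : Set X) =ᵇ (range f) := by
    rw [Filter.eventuallyEq_set]
    have : Mtotᶜ ⊆ {x | x ∈ Bs 0 Fin.elim0 ↔ x ∈ range f} := by
      intro z hz
      simp only [mem_setOf_eq]
      exact ⟨fun h => hsub2 ⟨h, hz⟩, fun h => hsub1 h⟩
    exact Filter.mem_of_superset hMtotMeagre this
  exact (hBP 0 Fin.elim0).congr heq
end Analytic

section Flip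
/-- The homeomorphism of Cantor space flipping coordinates where `p` is true. -/
def flipHomeo (p : ℕ → Bool) : (ℕ → Bool) ≃ₜ (ℕ → Bool) where
  toFun x := fun n => xor (p n) (x n)
  invFun x := fun n => xor (p n) (x n)
  left_inv x := by funext n; simp [Bool.xor_left_comm]
  right_inv x := by funext n; simp [Bool.xor_left_comm]
  continuous_toFun := continuous_pi fun n =>
    (continuous_of_discreteTopology (f := fun b => xor (p n) b)).comp (continuous_apply n)
  continuous_invFun := continuous_pi fun n =>
    (continuous_of_discreteTopology (f := fun b => xor (p n) b)).comp (continuous_apply n)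

lemma flipHomeo_apply (p : ℕ → Bool) (x : ℕ → Bool) (n : ℕ) :
    flipHomeo p x n = xor (p n) (x n) := rfl

lemma flipHomeo_invol (p : ℕ → Bool) (x : ℕ → Bool) :
    flipHomeo p (flipHomeo p x) = x := (flipHomeo p).left_inv x

lemma preimage_meagre {X Y : Type*} [TopologicalSpace X] [TopologicalSpace Y]
    (h : X ≃ₜ Y) {s : Set Y} (hs : IsMeagre s) : IsMeagre (h ⁻¹' s) :=
  hs.preimage_of_isOpenMap h.continuous h.isOpenMap

lemma exists_open_of_not_meagre {X : Type*} [TopologicalSpace X] {S : Set X}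
    (h : BaireMeasurableSet S) (hn : ¬ IsMeagre S) :
    ∃ U, IsOpen U ∧ U.Nonempty ∧ IsMeagre (U \ S) := by
  rcases h.residualEq_isOpen with ⟨U, hUo, hUeq⟩
  have hsymm : IsMeagre ((S \ U) ∪ (U \ S)) := by
    rw [IsMeagre]
    rw [Filter.eventuallyEq_set] at hUeq
    filter_upwards [hUeq] with x hx
    simp only [mem_union, mem_diff, mem_compl_iff]
    tauto
  refine ⟨U, hUo, ?_, hsymm.mono subset_union_right⟩
  rcases eq_empty_or_nonempty U with rfl | h
  · exact absurd ((hsymm.mono subset_union_left).mono (by simp)) hn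
  · exact h
end Flip

open Classical in
/-- The identification of subsets of ℕ with points of Cantor space. -/
noncomputable def chi (A : Set ℕ) : ℕ → Bool := fun n => if n ∈ A then true else false

theorem analytic_filter_meager
    (F : Filter ℕ) (hFne : F.NeBot) (hext : F ≤ Filter.cofinite)
    (hA : MeasureTheory.AnalyticSet (chi '' F.sets)) :
    IsMeagre (chi '' F.sets) := by
  set S : Set (ℕ → Bool) := chi '' F.sets with hS
  by_contra hnm
  have hBP : BaireMeasurableSet S := hA.baireMeasurableSet'
  -- S is invariant under flipping finitely many coordinates
  have hinv : ∀ p : ℕ → Bool, {n | p n = true}.Finite → ∀ x ∈ S, flipHomeo p x ∈ S := by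
    rintro p hp _ ⟨A, hAF, rfl⟩
    set P : Set ℕ := {n | p n = true} with hP
    have hPc : Pᶜ ∈ F := hext (by rw [Filter.mem_cofinite, compl_compl]; exact hp)
    refine ⟨(A \ P) ∪ (P \ A), ?_, ?_⟩
    · exact F.sets_of_superset (F.inter_sets hAF hPc)
        (fun k hk => Or.inl ⟨hk.1, hk.2⟩)
    · funext k
      by_cases h1 : k ∈ A <;> cases hpk : p k <;>
        simp [chi, flipHomeo_apply, h1, hpk, hP, Set.mem_union, Set.mem_diff, Set.mem_setOf_eq]
  -- S is comeager in some cylinder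
  obtain ⟨U, hUo, ⟨v, hv⟩, hUS⟩ := exists_open_of_not_meagre hBP hnm
  obtain ⟨n, hn⟩ := cyl_mem_nhds (hUo.mem_nhds hv)
  have hC : IsMeagre ({z : ℕ → Bool | ∀ i < n, z i = v i} \ S) :=
    hUS.mono (diff_subset_diff_left hn)
  -- hence S is comeager
  have hcomeager : IsMeagre Sᶜ := by
    have hcov : Sᶜ ⊆ ⋃ w : Fin n → Bool, ({z : ℕ → Bool | ∀ i : Fin n, z i = w i} \ S) := by
      intro z hz
      exact mem_iUnion.2 ⟨fun i => z i, fun i => rfl, hz⟩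
    refine (isMeagre_iUnion' ?_).mono hcov
    intro w
    set p : ℕ → Bool := fun i => if h : i < n then xor (v i) (w ⟨i, h⟩) else false with hp
    have hpfin : {i | p i = true}.Finite := by
      refine (Set.finite_Iio n).subset ?_
      intro i hi
      simp only [hp, Set.mem_setOf_eq] at hi
      by_contra h
      rw [dif_neg (by simpa using h)] at hi
      exact Bool.false_ne_true hi
    have hmap : ({z : ℕ → Bool | ∀ i : Fin n, z i = w i} \ S) ⊆
        (flipHomeo p) ⁻¹' ({z : ℕ → Bool | ∀ i < n, z i = v i} \ S) := by
      rintro z ⟨hz, hzS⟩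
      refine ⟨fun i hi => ?_, fun hmem => ?_⟩
      · show xor (p i) (z i) = v i
        rw [hz ⟨i, hi⟩]
        simp [hp, hi, Bool.xor_assoc]
      · refine hzS ?_
        have := hinv p hpfin _ hmem
        rwa [flipHomeo_invol] at this
    exact (preimage_meagre (flipHomeo p) hC).mono hmap
  -- the "complement" homeomorphism also maps S to a comeager set
  have hcS : IsMeagre ((flipHomeo (fun _ => true)) ⁻¹' Sᶜ) :=
    preimage_meagre _ hcomeager
  have h1 : S ∈ residual (ℕ → Bool) := by
    have := hcomeager; rwa [IsMeagre, compl_compl] at this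
  have h2 : (flipHomeo (fun _ => true)) ⁻¹' S ∈ residual (ℕ → Bool) := by
    have := hcS; rwa [IsMeagre, ← preimage_compl, compl_compl] at this
  obtain ⟨x, hx1, hx2⟩ := (dense_of_mem_residual (Filter.inter_mem h1 h2)).nonempty
  obtain ⟨A, hAF, rfl⟩ := hx1
  obtain ⟨B, hBF, hBe⟩ := hx2
  have hBA : B = Aᶜ := by
    ext k
    have hk := congrFun hBe k
    by_cases h1 : k ∈ A <;> by_cases h2 : k ∈ B <;>
      simp [chi, flipHomeo_apply, h1, h2] at hk ⊢
  have hbot : (∅ : Set ℕ) ∈ F := by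
    have := F.inter_sets hAF hBF
    rwa [hBA, Set.inter_compl_self] at this
  exact hFne.ne (Filter.empty_mem_iff_bot.1 hbot)
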